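/- Let Σ be a simplicial complex, F a poset, and f : Σ → F a p-morphism from the face poset of Σ to F (f(↑σ) = ↑f(σ) for all σ ∈ Σ). Define f̂ : |Σ| → F by f̂(x) = f(σˣ). Then f̂ is an open map: for every open W ⊆ |Σ|, the image f̂[W] is upward-closed in F. -/

import Mathlib

open Set AffineSubspace

lemma subset_closure_intrinsicInterior {V : Type*} [NormedAddCommGroup V] [NormedSpace ℝ V]
    [FiniteDimensional ℝ V] {s : Set V} (hs : Convex ℝ s) :
    s ⊆ closure (intrinsicInterior ℝ s) := by
  intro x hx
  obtain ⟨z, ⟨z', hz', hzz⟩⟩ := (Set.Nonempty.intrinsicInterior hs ⟨x, hx⟩)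
  have hxA : x ∈ affineSpan ℝ s := subset_affineSpan ℝ s hx
  let x' : affineSpan ℝ s := ⟨x, hxA⟩
  haveI : Nonempty (affineSpan ℝ s) := ⟨x'⟩
  let φ := AffineIsometryEquiv.constVSub ℝ x'
  let ψ : (affineSpan ℝ s).direction →ᵃ[ℝ] V :=
    (affineSpan ℝ s).subtype.comp φ.symm.toAffineEquiv.toAffineMap
  have hψ : ∀ w, ψ w = ((φ.symm w : affineSpan ℝ s) : V) := fun w => rfl
  have hS : (ψ ⁻¹' s) = φ.symm.toHomeomorph ⁻¹' ((↑) ⁻¹' s : Set (affineSpan ℝ s)) := rfl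
  have hconv : Convex ℝ (ψ ⁻¹' s) := hs.affine_preimage ψ
  have hintS : interior (ψ ⁻¹' s)
      = φ.symm.toHomeomorph ⁻¹' interior ((↑) ⁻¹' s : Set (affineSpan ℝ s)) := by
    rw [hS, Homeomorph.preimage_interior]
  have hzin : φ z' ∈ interior (ψ ⁻¹' s) := by
    rw [hintS]; simpa using hz'
  have hxin : φ x' ∈ (ψ ⁻¹' s) := by
    rw [hS]; simpa using hx
  have hseg : openSegment ℝ (φ z') (φ x') ⊆ interior (ψ ⁻¹' s) :=
    hconv.openSegment_interior_self_subset_interior hzin hxin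
  have himg : openSegment ℝ z x ⊆ intrinsicInterior ℝ s := by
    have him : openSegment ℝ (ψ (φ z')) (ψ (φ x')) = ψ '' openSegment ℝ (φ z') (φ x') :=
      (image_openSegment ℝ ψ _ _).symm
    intro w hw
    have hw' : w ∈ ψ '' openSegment ℝ (φ z') (φ x') := by
      rw [← him]
      have h1 : ψ (φ z') = z := by rw [hψ]; simp [hzz]
      have h2 : ψ (φ x') = x := by rw [hψ]; simp [x']
      rw [h1, h2]; exact hw
    obtain ⟨w'', hw'', rfl⟩ := hw'
    exact ⟨φ.symm w'', by rw [hintS] at hseg; exact hseg hw'', rfl⟩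
  have : x ∈ closure (openSegment ℝ z x) := by
    rw [closure_openSegment]; exact right_mem_segment _ _ _
  exact closure_mono himg this

open Geometry

theorem stmt11 {n : ℕ} (K : SimplicialComplex ℝ (EuclideanSpace ℝ (Fin n)))
    {F : Type*} [PartialOrder F]
    (f : Finset (EuclideanSpace ℝ (Fin n)) → F)
    -- `f` is a p-morphism from the face poset of `K` to `F`: `f(↑s) = ↑f(s)`
    (hp : ∀ s ∈ K.faces,
      {y : F | ∃ t ∈ K.faces, s ⊆ t ∧ f t = y} = {y : F | f s ≤ y})
    -- `σ x` is the unique face of `K` whose relative interior contains `x`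
    (σ : K.space → Finset (EuclideanSpace ℝ (Fin n)))
    (hσ : ∀ x : K.space, σ x ∈ K.faces ∧
      (x : EuclideanSpace ℝ (Fin n)) ∈ intrinsicInterior ℝ (convexHull ℝ (σ x : Set (EuclideanSpace ℝ (Fin n)))))
    (hσuniq : ∀ x : K.space, ∀ s ∈ K.faces,
      (x : EuclideanSpace ℝ (Fin n)) ∈ intrinsicInterior ℝ (convexHull ℝ (s : Set (EuclideanSpace ℝ (Fin n)))) →
      s = σ x)
    (W : Set K.space) (hW : IsOpen W) :
    IsUpperSet {y : F | ∃ x ∈ W, f (σ x) = y} := by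
  intro a b hab ⟨x, hxW, hfx⟩
  have hface := (hσ x).1
  have hb : b ∈ {y : F | f (σ x) ≤ y} := by rw [hfx]; exact hab
  rw [← hp (σ x) hface] at hb
  obtain ⟨t, ht, hst, hft⟩ := hb
  -- x lies in conv t, hence in the closure of its intrinsic interior
  have hxconv : (x : EuclideanSpace ℝ (Fin n)) ∈ convexHull ℝ (t : Set (EuclideanSpace ℝ (Fin n))) :=
    convexHull_mono (by exact_mod_cast hst) (intrinsicInterior_subset (hσ x).2)
  have hxcl : (x : EuclideanSpace ℝ (Fin n)) ∈
      closure (intrinsicInterior ℝ (convexHull ℝ (t : Set (EuclideanSpace ℝ (Fin n))))) :=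
    subset_closure_intrinsicInterior (convex_convexHull ℝ _) hxconv
  obtain ⟨U, hU, hWU⟩ := isOpen_induced_iff.1 hW
  have hxU : (x : EuclideanSpace ℝ (Fin n)) ∈ U := by
    rw [← hWU] at hxW; exact hxW
  obtain ⟨x₀, hx₀U, hx₀i⟩ := mem_closure_iff.1 hxcl U hU hxU
  have hx₀space : x₀ ∈ K.space := K.convexHull_subset_space ht (intrinsicInterior_subset hx₀i)
  set x' : K.space := ⟨x₀, hx₀space⟩
  have hx'W : x' ∈ W := by rw [← hWU]; exact hx₀U
  have : t = σ x' := hσuniq x' t ht hx₀i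
  exact ⟨x', hx'W, by rw [← this, hft]⟩
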